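/- For the Bures/SLD choice f(x) = (1+x)/2, the quantum Fisher quadratic form K_{f,ρ}(A,A) = Σ_{i,j} 2|Aᵢⱼ|²/(λᵢ+λⱼ) (in the eigenbasis of the full-rank density matrix ρ) contracts under every CPTP map Φ: K_{f,Φ(ρ)}(Φ(A),Φ(A)) ≤ K_{f,ρ}(A,A), for all full-rank ρ with Φ(ρ) full-rank and all Hermitian A. -/

import Mathlib

open Matrix Finset
open scoped ComplexOrder

variable {d : ℕ}

lemma psd_zero : (0 : Matrix (Fin d) (Fin d) ℂ).PosSemidef := by
  constructor
  · simp [Matrix.IsHermitian]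
  · intro x; simp

lemma psd_sum {ι : Type*} (s : Finset ι) (f : ι → Matrix (Fin d) (Fin d) ℂ)
    (hf : ∀ i ∈ s, (f i).PosSemidef) : (∑ i ∈ s, f i).PosSemidef :=
  Finset.sum_induction f _ (fun _ _ ha hb => ha.add hb) psd_zero hf

lemma psd_diag_re_nonneg {M : Matrix (Fin d) (Fin d) ℂ} (hM : M.PosSemidef) (i : Fin d) :
    0 ≤ (M i i).re := by
  have := hM.2 (Finsupp.single i 1)
  simp [Matrix.mulVec_single, dotProduct, Pi.single_apply] at this
  exact (Complex.le_def.mp this).1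

lemma trace_psd_mul_nonneg {P Q : Matrix (Fin d) (Fin d) ℂ}
    (hP : P.PosSemidef) (hQ : Q.PosSemidef) : 0 ≤ (Matrix.trace (P * Q)).re := by
  obtain ⟨C, rfl⟩ : ∃ C : Matrix (Fin d) (Fin d) ℂ, P = Cᴴ * C := by
    open scoped MatrixOrder in exact CStarAlgebra.nonneg_iff_eq_star_mul_self.mp hP.nonneg
  rw [Matrix.mul_assoc, trace_mul_comm]
  have hpsd : (C * (Q * Cᴴ)).PosSemidef := by
    have := hQ.mul_mul_conjTranspose_same C
    rwa [Matrix.mul_assoc] at this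
  rw [Matrix.trace, Complex.re_sum]
  exact Finset.sum_nonneg fun i _ => by simpa [Matrix.diag, Matrix.mul_assoc] using psd_diag_re_nonneg hpsd i


variable {d : ℕ}

-- unitarity facts
lemma hU_mul {M : Matrix (Fin d) (Fin d) ℂ} (h : M.IsHermitian) :
    (h.eigenvectorUnitary : Matrix (Fin d) (Fin d) ℂ) *
      (h.eigenvectorUnitary : Matrix (Fin d) (Fin d) ℂ)ᴴ = 1 := by
  simpa [Matrix.star_eq_conjTranspose] using
    (Matrix.mem_unitaryGroup_iff).mp h.eigenvectorUnitary.2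

lemma hU_mul' {M : Matrix (Fin d) (Fin d) ℂ} (h : M.IsHermitian) :
    (h.eigenvectorUnitary : Matrix (Fin d) (Fin d) ℂ)ᴴ *
      (h.eigenvectorUnitary : Matrix (Fin d) (Fin d) ℂ) = 1 :=
  mul_eq_one_comm.mp (hU_mul h)

-- conjugation is multiplicative
lemma conjBasis_mul (U X A : Matrix (Fin d) (Fin d) ℂ) (hU : U * Uᴴ = 1) :
    (Uᴴ * X * U) * (Uᴴ * A * U) = Uᴴ * (X * A) * U := by
  calc (Uᴴ * X * U) * (Uᴴ * A * U) = Uᴴ * (X * ((U * Uᴴ) * (A * U))) := by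
        simp only [Matrix.mul_assoc]
    _ = Uᴴ * (X * A) * U := by rw [hU, Matrix.one_mul]; simp only [Matrix.mul_assoc]

lemma trace_conj (U M : Matrix (Fin d) (Fin d) ℂ) (hU : U * Uᴴ = 1) :
    Matrix.trace (Uᴴ * M * U) = Matrix.trace M := by
  rw [trace_mul_cycle]
  rw [hU, Matrix.one_mul]

lemma trace_conjBasis_mul (U X A : Matrix (Fin d) (Fin d) ℂ) (hU : U * Uᴴ = 1) :
    Matrix.trace (X * A) = Matrix.trace ((Uᴴ * X * U) * (Uᴴ * A * U)) := by
  rw [conjBasis_mul U X A hU, trace_conj _ _ hU]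

lemma conj_herm {U X : Matrix (Fin d) (Fin d) ℂ} (hX : X.IsHermitian) :
    (Uᴴ * X * U).IsHermitian := by
  unfold Matrix.IsHermitian
  simp [Matrix.conjTranspose_mul, Matrix.mul_assoc, hX.eq]

lemma trace_mul_re (P Q : Matrix (Fin d) (Fin d) ℂ) (hQ : Q.IsHermitian) :
    (Matrix.trace (P * Q)).re = ∑ i, ∑ j, (P i j * (starRingEnd ℂ) (Q i j)).re := by
  rw [Matrix.trace]
  rw [Complex.re_sum]
  refine Finset.sum_congr rfl fun i _ => ?_
  rw [Matrix.diag_apply, Matrix.mul_apply, Complex.re_sum]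
  refine Finset.sum_congr rfl fun j _ => ?_
  congr 1
  rw [← hQ.apply i j, RCLike.star_def, Complex.conj_conj]

lemma trace_quad_re (P : Matrix (Fin d) (Fin d) ℂ) (hP : P.IsHermitian) (g : Fin d → ℝ) :
    (Matrix.trace (P * (Matrix.diagonal fun j => ((g j : ℝ) : ℂ)) * P)).re
      = ∑ i, ∑ j, g j * ‖P i j‖ ^ 2 := by
  rw [Matrix.trace, Complex.re_sum]
  refine Finset.sum_congr rfl fun i _ => ?_
  rw [Matrix.diag_apply, Matrix.mul_apply, Complex.re_sum]
  refine Finset.sum_congr rfl fun j _ => ?_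
  rw [Matrix.mul_diagonal]
  have h1 : P j i = (starRingEnd ℂ) (P i j) := by
    rw [← hP.apply i j, RCLike.star_def, Complex.conj_conj]
  rw [h1]
  have h2 : P i j * (starRingEnd ℂ) (P i j) = ((‖P i j‖ ^ 2 : ℝ) : ℂ) := by
    rw [Complex.mul_conj]
    norm_cast
    rw [← Complex.sq_norm]
  calc (P i j * ↑(g j) * (starRingEnd ℂ) (P i j)).re
      = (((g j : ℝ) : ℂ) * ((‖P i j‖ ^ 2 : ℝ) : ℂ)).re := by rw [← h2]; ring_nf
    _ = g j * ‖P i j‖ ^ 2 := by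
        rw [← Complex.ofReal_mul, Complex.ofReal_re]

lemma sum_symmetrize (lam : Fin d → ℝ) (n : Fin d → Fin d → ℝ)
    (hn : ∀ i j, n i j = n j i) :
    ∑ i, ∑ j, lam j * n i j = ∑ i, ∑ j, (lam i + lam j) / 2 * n i j := by
  have h1 : ∑ i, ∑ j, lam j * n i j = ∑ i, ∑ j, lam i * n i j := by
    rw [Finset.sum_comm]
    exact Finset.sum_congr rfl fun i _ => Finset.sum_congr rfl fun j _ => by rw [hn]
  have h2 : ∀ (c : ℝ) (f g : Fin d → Fin d → ℝ),
      (∀ i j, f i j = g i j) → ∑ i, ∑ j, f i j = ∑ i, ∑ j, g i j :=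
    fun c f g h => Finset.sum_congr rfl fun i _ => Finset.sum_congr rfl fun j _ => h i j
  have h3 : ∑ i, ∑ j, (lam i + lam j) / 2 * n i j
      = (∑ i, ∑ j, lam i * n i j) / 2 + (∑ i, ∑ j, lam j * n i j) / 2 := by
    simp only [Finset.sum_div, ← Finset.sum_add_distrib]
    exact h2 0 _ _ fun i j => by ring
  rw [h3, ← h1]; ring

lemma scalar_ineq {s t a r : ℝ} (hs : 0 < s) (ht : t ≤ a * r) :
    2 * t - s / 2 * r ^ 2 ≤ 2 * a ^ 2 / s := by
  rw [le_div_iff₀ hs]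
  nlinarith [sq_nonneg (s * r - 2 * a)]


/-- Quantum Fisher quadratic form `K_{f,ρ}(A,A)` in the eigenbasis of `ρ`. -/
noncomputable def Kf (f : ℝ → ℝ) {d : ℕ} (ρ A : Matrix (Fin d) (Fin d) ℂ) : ℝ :=
  if h : ρ.IsHermitian then
    ∑ i, ∑ j,
      ‖((h.eigenvectorUnitary : Matrix (Fin d) (Fin d) ℂ)ᴴ * A *
        (h.eigenvectorUnitary : Matrix (Fin d) (Fin d) ℂ)) i j‖ ^ 2 /
        (h.eigenvalues j * f (h.eigenvalues i / h.eigenvalues j))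
  else 0

lemma Kf_eq {ρ : Matrix (Fin d) (Fin d) ℂ} (hρ : ρ.PosDef)
    (A : Matrix (Fin d) (Fin d) ℂ) :
    Kf (fun x => (1 + x) / 2) ρ A
      = ∑ i, ∑ j,
          2 * ‖((hρ.1.eigenvectorUnitary : Matrix (Fin d) (Fin d) ℂ)ᴴ * A *
            (hρ.1.eigenvectorUnitary : Matrix (Fin d) (Fin d) ℂ)) i j‖ ^ 2 /
            (hρ.1.eigenvalues i + hρ.1.eigenvalues j) := by
  rw [Kf, dif_pos hρ.1]
  refine Finset.sum_congr rfl fun i _ => Finset.sum_congr rfl fun j _ => ?_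
  have hi : 0 < hρ.1.eigenvalues i := hρ.eigenvalues_pos i
  have hj : 0 < hρ.1.eigenvalues j := hρ.eigenvalues_pos j
  rw [show hρ.1.eigenvalues j * ((1 + hρ.1.eigenvalues i / hρ.1.eigenvalues j) / 2)
      = (hρ.1.eigenvalues i + hρ.1.eigenvalues j) / 2 by field_simp; ring]
  rw [div_div_eq_mul_div]
  ring

lemma quad_le_Kf {ρ A X : Matrix (Fin d) (Fin d) ℂ} (hρ : ρ.PosDef)
    (hA : A.IsHermitian) (hX : X.IsHermitian) :
    2 * (Matrix.trace (X * A)).re - (Matrix.trace (X * ρ * X)).re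
      ≤ Kf (fun x => (1 + x) / 2) ρ A := by
  rw [Kf_eq hρ]
  set U := (hρ.1.eigenvectorUnitary : Matrix (Fin d) (Fin d) ℂ) with hUdef
  set lam := hρ.1.eigenvalues with hlam
  set X' := Uᴴ * X * U with hX'def
  set A' := Uᴴ * A * U with hA'def
  have hUU : U * Uᴴ = 1 := hU_mul hρ.1
  have hX' : X'.IsHermitian := conj_herm hX
  have hA' : A'.IsHermitian := conj_herm hA
  have e1 : (Matrix.trace (X * A)).re
      = ∑ i, ∑ j, (X' i j * (starRingEnd ℂ) (A' i j)).re := by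
    rw [trace_conjBasis_mul U X A hUU]; exact trace_mul_re X' A' hA'
  have hspec : ρ = U * Matrix.diagonal (fun j => ((lam j : ℝ) : ℂ)) * Uᴴ := by
    have h := hρ.1.spectral_theorem
    rwa [Unitary.conjStarAlgAut_apply, Matrix.star_eq_conjTranspose] at h
  have e2 : (Matrix.trace (X * ρ * X)).re = ∑ i, ∑ j, lam j * ‖X' i j‖ ^ 2 := by
    have key : X' * Matrix.diagonal (fun j => ((lam j : ℝ) : ℂ)) * X'
        = Uᴴ * (X * ρ * X) * U := by
      rw [hspec, hX'def]; simp only [Matrix.mul_assoc, Matrix.mul_one]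
    rw [← trace_conj U (X * ρ * X) hUU, ← key]
    exact trace_quad_re X' hX' lam
  rw [e1, e2, sum_symmetrize lam (fun i j => ‖X' i j‖ ^ 2)
    (fun i j => by show ‖X' i j‖ ^ 2 = ‖X' j i‖ ^ 2; rw [← hX'.apply i j]; simp)]
  rw [Finset.mul_sum]
  simp only [Finset.mul_sum, ← Finset.sum_sub_distrib]
  refine Finset.sum_le_sum fun i _ => Finset.sum_le_sum fun j _ => ?_
  have hs : 0 < lam i + lam j :=
    add_pos (hρ.eigenvalues_pos i) (hρ.eigenvalues_pos j)
  have ht : (X' i j * (starRingEnd ℂ) (A' i j)).re ≤ ‖A' i j‖ * ‖X' i j‖ := by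
    calc (X' i j * (starRingEnd ℂ) (A' i j)).re ≤ ‖X' i j * (starRingEnd ℂ) (A' i j)‖ :=
          Complex.re_le_norm _
      _ = ‖A' i j‖ * ‖X' i j‖ := by rw [norm_mul]; simp [mul_comm]
  exact scalar_ineq hs ht

lemma Kf_attained {σ B : Matrix (Fin d) (Fin d) ℂ} (hσ : σ.PosDef) (hB : B.IsHermitian) :
    ∃ L : Matrix (Fin d) (Fin d) ℂ, L.IsHermitian ∧
      Kf (fun x => (1 + x) / 2) σ B
        = 2 * (Matrix.trace (L * B)).re - (Matrix.trace (L * σ * L)).re := by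
  set U := (hσ.1.eigenvectorUnitary : Matrix (Fin d) (Fin d) ℂ) with hUdef
  set mu := hσ.1.eigenvalues with hmu
  set B' := Uᴴ * B * U with hB'def
  have hUU : U * Uᴴ = 1 := hU_mul hσ.1
  have hU'U : Uᴴ * U = 1 := hU_mul' hσ.1
  have hB' : B'.IsHermitian := conj_herm hB
  set M : Matrix (Fin d) (Fin d) ℂ :=
    Matrix.of (fun i j => (((2 / (mu i + mu j) : ℝ)) : ℂ) * B' i j) with hMdef
  have hMapp : ∀ i j, M i j = (((2 / (mu i + mu j) : ℝ)) : ℂ) * B' i j := fun i j => rfl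
  have hM : M.IsHermitian := by
    apply Matrix.IsHermitian.ext
    intro i j
    rw [hMapp i j, hMapp j i, star_mul']
    rw [show star ((((2 / (mu j + mu i) : ℝ)) : ℂ)) = (((2 / (mu j + mu i) : ℝ)) : ℂ) from by
      rw [RCLike.star_def, Complex.conj_ofReal]]
    rw [hB'.apply i j, add_comm (mu j) (mu i), mul_comm]
  refine ⟨U * M * Uᴴ, ?_, ?_⟩
  · unfold Matrix.IsHermitian
    simp only [Matrix.conjTranspose_mul, Matrix.conjTranspose_conjTranspose, hM.eq,
      Matrix.mul_assoc]
  · have hconj : Uᴴ * (U * M * Uᴴ) * U = M := by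
      simp only [Matrix.mul_assoc]
      rw [hU'U]
      simp only [Matrix.mul_one, ← Matrix.mul_assoc, hU'U, Matrix.one_mul]
    have hspec : σ = U * Matrix.diagonal (fun j => ((mu j : ℝ) : ℂ)) * Uᴴ := by
      have h := hσ.1.spectral_theorem
      rwa [Unitary.conjStarAlgAut_apply, Matrix.star_eq_conjTranspose] at h
    have e1 : (Matrix.trace ((U * M * Uᴴ) * B)).re
        = ∑ i, ∑ j, 2 / (mu i + mu j) * ‖B' i j‖ ^ 2 := by
      rw [trace_conjBasis_mul U (U * M * Uᴴ) B hUU, hconj, trace_mul_re M B' hB']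
      refine Finset.sum_congr rfl fun i _ => Finset.sum_congr rfl fun j _ => ?_
      rw [hMapp i j, mul_assoc, Complex.mul_conj]
      rw [show (Complex.normSq (B' i j) : ℂ) = ((‖B' i j‖ ^ 2 : ℝ) : ℂ) by
        norm_cast; rw [← Complex.sq_norm]]
      rw [← Complex.ofReal_mul, Complex.ofReal_re]
    have e2 : (Matrix.trace ((U * M * Uᴴ) * σ * (U * M * Uᴴ))).re
        = ∑ i, ∑ j, mu j * ((2 / (mu i + mu j)) ^ 2 * ‖B' i j‖ ^ 2) := by
      have key : M * Matrix.diagonal (fun j => ((mu j : ℝ) : ℂ)) * M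
          = Uᴴ * ((U * M * Uᴴ) * σ * (U * M * Uᴴ)) * U := by
        rw [hspec]
        simp only [Matrix.mul_assoc, hU'U, Matrix.mul_one]
        simp only [← Matrix.mul_assoc, hU'U, Matrix.one_mul]
      rw [← trace_conj U _ hUU, ← key, trace_quad_re M hM mu]
      refine Finset.sum_congr rfl fun i _ => Finset.sum_congr rfl fun j _ => ?_
      rw [hMapp i j, norm_mul, mul_pow, Complex.norm_real, Real.norm_eq_abs, sq_abs]
    rw [e1, e2, Kf_eq hσ, ← hUdef, ← hmu, ← hB'def]
    rw [sum_symmetrize mu (fun i j => (2 / (mu i + mu j)) ^ 2 * ‖B' i j‖ ^ 2)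
      (fun i j => by
        show (2 / (mu i + mu j)) ^ 2 * ‖B' i j‖ ^ 2
          = (2 / (mu j + mu i)) ^ 2 * ‖B' j i‖ ^ 2
        rw [← hB'.apply i j, add_comm (mu j) (mu i)]; simp)]
    simp only [Finset.mul_sum, ← Finset.sum_sub_distrib]
    refine Finset.sum_congr rfl fun i _ => Finset.sum_congr rfl fun j _ => ?_
    have hs : 0 < mu i + mu j := add_pos (hσ.eigenvalues_pos i) (hσ.eigenvalues_pos j)
    field_simp
    ring

/-- Petz monotonicity for the SLD/Bures metric `f(x) = (1+x)/2`: the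
corresponding quantum Fisher form contracts under every CPTP map given in
Kraus form. -/
theorem sld_fisher_contracts_under_cptp {d κ : ℕ}
    (V : Fin κ → Matrix (Fin d) (Fin d) ℂ)
    (hKraus : ∑ k, (V k)ᴴ * V k = (1 : Matrix (Fin d) (Fin d) ℂ))
    (ρ : Matrix (Fin d) (Fin d) ℂ) (hρ : ρ.PosDef) (hρtr : Matrix.trace ρ = 1)
    (hΦρ : (∑ k, V k * ρ * (V k)ᴴ).PosDef)
    (A : Matrix (Fin d) (Fin d) ℂ) (hA : A.IsHermitian) :
    Kf (fun x => (1 + x) / 2) (∑ k, V k * ρ * (V k)ᴴ)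
        (∑ k, V k * A * (V k)ᴴ)
      ≤ Kf (fun x => (1 + x) / 2) ρ A := by
  have hB : (∑ k, V k * A * (V k)ᴴ).IsHermitian := by
    unfold Matrix.IsHermitian
    rw [Matrix.conjTranspose_sum]
    exact Finset.sum_congr rfl fun k _ => by
      simp only [Matrix.conjTranspose_mul, Matrix.conjTranspose_conjTranspose, hA.eq,
        Matrix.mul_assoc]
  obtain ⟨L, hL, hKval⟩ := Kf_attained hΦρ hB
  set Y := ∑ k, (V k)ᴴ * L * V k with hYdef
  have hY : Y.IsHermitian := by
    unfold Matrix.IsHermitian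
    rw [hYdef, Matrix.conjTranspose_sum]
    exact Finset.sum_congr rfl fun k _ => by
      simp only [Matrix.conjTranspose_mul, Matrix.conjTranspose_conjTranspose, hL.eq,
        Matrix.mul_assoc]
  -- trace identities
  have tr1 : Matrix.trace (L * ∑ k, V k * A * (V k)ᴴ) = Matrix.trace (Y * A) := by
    rw [Matrix.mul_sum, trace_sum, hYdef, Matrix.sum_mul, trace_sum]
    refine Finset.sum_congr rfl fun k _ => ?_
    rw [show L * (V k * A * (V k)ᴴ) = (L * V k * A) * (V k)ᴴ by
      simp only [Matrix.mul_assoc], trace_mul_comm]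
    simp only [Matrix.mul_assoc]
  have tr2 : Matrix.trace (L * (∑ k, V k * ρ * (V k)ᴴ) * L)
      = Matrix.trace ((∑ k, (V k)ᴴ * (L * L) * V k) * ρ) := by
    rw [Matrix.mul_sum, Matrix.sum_mul, trace_sum, Matrix.sum_mul, trace_sum]
    refine Finset.sum_congr rfl fun k _ => ?_
    rw [show L * (V k * ρ * (V k)ᴴ) * L = (L * V k * ρ) * ((V k)ᴴ * L) by
      simp only [Matrix.mul_assoc], trace_mul_comm]
    rw [show (V k)ᴴ * L * (L * V k * ρ) = ((V k)ᴴ * (L * L) * V k) * ρ by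
      simp only [Matrix.mul_assoc]]
  -- Kadison–Schwarz
  have hKS : ((∑ k, (V k)ᴴ * (L * L) * V k) - Y * Y).PosSemidef := by
    have expand_each : ∀ k, (L * V k - V k * Y)ᴴ * (L * V k - V k * Y)
        = (V k)ᴴ * (L * L) * V k - (V k)ᴴ * L * V k * Y
          - Y * ((V k)ᴴ * L * V k) + Y * ((V k)ᴴ * V k * Y) := by
      intro k
      simp only [Matrix.conjTranspose_sub, Matrix.conjTranspose_mul, hL.eq, hY.eq]
      noncomm_ring
    have hexp : ∑ k, (L * V k - V k * Y)ᴴ * (L * V k - V k * Y)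
        = (∑ k, (V k)ᴴ * (L * L) * V k) - Y * Y := by
      simp only [expand_each, Finset.sum_add_distrib, Finset.sum_sub_distrib,
        ← Finset.sum_mul, ← Finset.mul_sum, hKraus, ← hYdef]
      rw [Matrix.one_mul]
      abel
    rw [← hexp]
    exact psd_sum _ _ fun k _ => Matrix.posSemidef_conjTranspose_mul_self _
  have hKStr : (Matrix.trace ((Y * Y) * ρ)).re
      ≤ (Matrix.trace ((∑ k, (V k)ᴴ * (L * L) * V k) * ρ)).re := by
    have h0 : 0 ≤ (Matrix.trace (((∑ k, (V k)ᴴ * (L * L) * V k) - Y * Y) * ρ)).re :=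
      trace_psd_mul_nonneg hKS hρ.posSemidef
    rw [Matrix.sub_mul, trace_sub, Complex.sub_re] at h0
    linarith
  have tr3 : Matrix.trace (Y * ρ * Y) = Matrix.trace ((Y * Y) * ρ) := by
    rw [trace_mul_cycle]
  calc Kf (fun x => (1 + x) / 2) (∑ k, V k * ρ * (V k)ᴴ) (∑ k, V k * A * (V k)ᴴ)
      = 2 * (Matrix.trace (L * ∑ k, V k * A * (V k)ᴴ)).re
        - (Matrix.trace (L * (∑ k, V k * ρ * (V k)ᴴ) * L)).re := hKval
    _ = 2 * (Matrix.trace (Y * A)).re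
        - (Matrix.trace ((∑ k, (V k)ᴴ * (L * L) * V k) * ρ)).re := by rw [tr1, tr2]
    _ ≤ 2 * (Matrix.trace (Y * A)).re - (Matrix.trace (Y * ρ * Y)).re := by
        rw [tr3]; linarith
    _ ≤ Kf (fun x => (1 + x) / 2) ρ A := quad_le_Kf hρ hA hY
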